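/- Let f be a monic complex polynomial of degree q ≥ 2. For every z ∈ ℂ the limit g(z) := lim_{n→∞} q^{-n} · log⁺|f^[n](z)| exists (where log⁺ t = max(log t, 0)). The resulting function g : ℂ → ℝ is continuous, satisfies g(f(z)) = q·g(z) for all z, vanishes exactly on the filled Julia set K(f) and is strictly positive off K(f), and satisfies g(z) − log|z| → 0 as |z| → ∞. -/

import Mathlib

open Filter Finset

/-- The filled Julia set of a polynomial `f`: the set of points whose forward orbit
under `f` is bounded. -/
def filledJulia (f : Polynomial ℂ) : Set ℂ :=
  {z : ℂ | Bornology.IsBounded (Set.range fun n : ℕ => (fun w : ℂ => f.eval w)^[n] z)}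

lemma logplus_eq (x : ℝ) (hx : 0 ≤ x) :
    max (Real.log x) 0 = Real.log (max x 1) := by
  rcases le_or_gt x 1 with h | h
  · rw [max_eq_right h, Real.log_one, max_eq_right (Real.log_nonpos hx h)]
  · rw [max_eq_left h.le, max_eq_left (Real.log_nonneg h.le)]

lemma contLog1 : Continuous fun t : ℝ => Real.log (max t 1) :=
  (continuous_id.max continuous_const).log fun t =>
    (lt_of_lt_of_le one_pos (le_max_right t 1)).ne'

lemma polyBound (q : ℕ) (hq : 2 ≤ q) (f : Polynomial ℂ)
    (hmonic : f.Monic) (hdeg : f.natDegree = q) :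
    ∃ B : ℝ, 1 ≤ B ∧ ∀ w : ℂ, 2 * B ≤ ‖w‖ →
      ‖w‖ ≤ ‖f.eval w‖ ∧
      |Real.log (‖f.eval w‖) - q * Real.log (‖w‖)|
        ≤ 2 * B / ‖w‖ := by
  refine ⟨1 + ∑ i ∈ Finset.range q, ‖f.coeff i‖, ?_, ?_⟩
  · have : (0:ℝ) ≤ ∑ i ∈ Finset.range q, ‖f.coeff i‖ :=
      Finset.sum_nonneg fun i _ => (norm_nonneg _)
    linarith
  set B : ℝ := 1 + ∑ i ∈ Finset.range q, ‖f.coeff i‖ with hBdef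
  have hB1 : 1 ≤ B := by
    have : (0:ℝ) ≤ ∑ i ∈ Finset.range q, ‖f.coeff i‖ :=
      Finset.sum_nonneg fun i _ => (norm_nonneg _)
    simp only [hBdef]; linarith
  intro w hw
  set a : ℝ := ‖w‖ with hadef
  have ha2 : (2:ℝ) ≤ a := by linarith
  have ha1 : (1:ℝ) ≤ a := by linarith
  have ha0 : (0:ℝ) < a := by linarith
  set P : ℝ := a ^ (q - 1) with hPdef
  have hP1 : (1:ℝ) ≤ P := one_le_pow₀ ha1
  have hPa : a ≤ P := by
    calc a = a ^ 1 := (pow_one a).symm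
    _ ≤ a ^ (q - 1) := pow_le_pow_right₀ ha1 (by omega)
  have hqpow : a ^ q = P * a := by
    rw [hPdef, ← pow_succ]
    congr 1
    omega
  have hcoeffq : f.coeff q = 1 := by
    rw [← hdeg]; exact hmonic.coeff_natDegree
  have hsum : f.eval w = (∑ i ∈ Finset.range q, f.coeff i * w ^ i) + w ^ q := by
    rw [Polynomial.eval_eq_sum_range, hdeg, Finset.sum_range_succ, hcoeffq, one_mul]
  have hdiff : ‖f.eval w - w ^ q‖ ≤ (B - 1) * P := by
    rw [hsum, add_sub_cancel_right]
    refine le_trans (norm_sum_le _ _) ?_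
    have hstep : ∀ i ∈ Finset.range q,
        ‖f.coeff i * w ^ i‖ ≤ ‖f.coeff i‖ * P := by
      intro i hi
      rw [norm_mul, norm_pow]
      refine mul_le_mul_of_nonneg_left ?_ (norm_nonneg _)
      exact pow_le_pow_right₀ ha1 (by simp at hi; omega)
    refine le_trans (Finset.sum_le_sum hstep) ?_
    rw [← Finset.sum_mul]
    have hBs : ∑ i ∈ Finset.range q, ‖f.coeff i‖ = B - 1 := by
      simp [hBdef]
    rw [hBs]
  set F : ℝ := ‖f.eval w‖ with hFdef
  have hFup : F - a ^ q ≤ (B - 1) * P := by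
    have h1 : F - a ^ q ≤ ‖f.eval w - w ^ q‖ := by
      have h := norm_sub_norm_le (f.eval w) (w ^ q)
      have h2 : ‖w ^ q‖ = a ^ q := by rw [norm_pow]
      calc F - a ^ q = ‖f.eval w‖ - ‖w ^ q‖ := by rw [h2]
        _ ≤ ‖f.eval w - w ^ q‖ := h
    linarith
  have hFlo : a ^ q - F ≤ (B - 1) * P := by
    have h1 : a ^ q - F ≤ ‖w ^ q - f.eval w‖ := by
      have h := norm_sub_norm_le (w ^ q) (f.eval w)
      have h2 : ‖w ^ q‖ = a ^ q := by rw [norm_pow]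
      calc a ^ q - F = ‖w ^ q‖ - ‖f.eval w‖ := by rw [h2]
        _ ≤ ‖w ^ q - f.eval w‖ := h
    have h3 : ‖w ^ q - f.eval w‖ = ‖f.eval w - w ^ q‖ := by
      rw [← norm_neg, neg_sub]
    rw [h3] at h1
    linarith
  have hBa : B ≤ a / 2 := by linarith
  have hFlow : P * (a / 2) ≤ F := by nlinarith
  have haF : a ≤ F := by nlinarith
  have hF0 : (0:ℝ) < F := lt_of_lt_of_le ha0 haF
  refine ⟨haF, ?_⟩
  have haq0 : (0:ℝ) < a ^ q := pow_pos ha0 q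
  rw [abs_le]
  constructor
  · have h1 : (q:ℝ) * Real.log a - Real.log F = Real.log (a ^ q / F) := by
      rw [Real.log_div haq0.ne' hF0.ne', Real.log_pow]
    have h2 : Real.log (a ^ q / F) ≤ a ^ q / F - 1 :=
      Real.log_le_sub_one_of_pos (div_pos haq0 hF0)
    have h3 : a ^ q / F - 1 ≤ 2 * B / a := by
      rw [div_sub_one hF0.ne', div_le_div_iff₀ hF0 ha0]
      nlinarith
    have h4 := h1 ▸ (h2.trans h3)
    linarith
  · have h1 : Real.log F - (q:ℝ) * Real.log a = Real.log (F / a ^ q) := by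
      rw [Real.log_div hF0.ne' haq0.ne', Real.log_pow]
    have h2 : Real.log (F / a ^ q) ≤ F / a ^ q - 1 :=
      Real.log_le_sub_one_of_pos (div_pos hF0 haq0)
    have h3 : F / a ^ q - 1 ≤ 2 * B / a := by
      rw [div_sub_one haq0.ne', div_le_div_iff₀ haq0 ha0]
      nlinarith
    linarith [h1 ▸ (h2.trans h3)]

lemma CBound (q : ℕ) (f : Polynomial ℂ) (B : ℝ) (hB1 : 1 ≤ B)
    (hpoly : ∀ w : ℂ, 2 * B ≤ ‖w‖ →
      ‖w‖ ≤ ‖f.eval w‖ ∧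
      |Real.log (‖f.eval w‖) - q * Real.log (‖w‖)|
        ≤ 2 * B / ‖w‖) :
    ∃ C : ℝ, 0 ≤ C ∧ ∀ w : ℂ,
      |Real.log (max (‖f.eval w‖) 1)
        - q * Real.log (max (‖w‖) 1)| ≤ C := by
  have hc0 : Continuous fun z : ℂ => Real.log (max (‖z‖) 1) :=
    contLog1.comp continuous_norm
  have hcont : Continuous fun w : ℂ => Real.log (max (‖f.eval w‖) 1)
      - q * Real.log (max (‖w‖) 1) := by
    exact (hc0.comp f.continuous).sub (continuous_const.mul hc0)
  obtain ⟨C₀, hC₀⟩ :=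
    (isCompact_closedBall (0:ℂ) (2*B)).exists_bound_of_continuousOn hcont.continuousOn
  refine ⟨max C₀ 1, le_trans zero_le_one (le_max_right _ _), fun w => ?_⟩
  rcases le_or_gt (‖w‖) (2*B) with h | h
  · have hw : w ∈ Metric.closedBall (0:ℂ) (2*B) := by
      simp only [Metric.mem_closedBall, Complex.dist_eq, sub_zero]
      exact h
    have h2 := hC₀ w hw
    rw [Real.norm_eq_abs] at h2
    exact le_trans h2 (le_max_left _ _)
  · obtain ⟨h1, h2⟩ := hpoly w h.le
    have haw2 : (2:ℝ) ≤ ‖w‖ := le_trans (by linarith) h.le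
    have e1 : max (‖w‖) 1 = ‖w‖ := max_eq_left (by linarith)
    have e2 : max (‖f.eval w‖) 1 = ‖f.eval w‖ :=
      max_eq_left (by linarith)
    rw [e1, e2]
    refine le_trans h2 (le_trans ?_ (le_max_right _ _))
    rw [div_le_one (by linarith)]
    exact h.le
/-- Existence and properties of the Green's function of the filled Julia set of a monic
polynomial of degree `q ≥ 2`: the limit `g(z) = lim_n q^{-n} log⁺|f^[n](z)|` exists for
every `z`, and `g` is continuous, satisfies `g(f(z)) = q g(z)`, vanishes exactly on the
filled Julia set and is strictly positive off it, and `g(z) - log|z| → 0` as `|z| → ∞`. -/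
theorem stmt_6 (q : ℕ) (hq : 2 ≤ q) (f : Polynomial ℂ)
    (hmonic : f.Monic) (hdeg : f.natDegree = q) :
    ∃ g : ℂ → ℝ,
      (∀ z : ℂ, Filter.Tendsto
        (fun n : ℕ => ((q : ℝ) ^ n)⁻¹ *
          max (Real.log (‖(fun w : ℂ => f.eval w)^[n] z‖)) 0)
        Filter.atTop (nhds (g z))) ∧
      Continuous g ∧
      (∀ z : ℂ, g (f.eval z) = q * g z) ∧
      (∀ z : ℂ, g z = 0 ↔ z ∈ filledJulia f) ∧
      (∀ z : ℂ, z ∉ filledJulia f → 0 < g z) ∧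
      Filter.Tendsto (fun z : ℂ => g z - Real.log (‖z‖))
        (Filter.comap (fun z : ℂ => ‖z‖) Filter.atTop) (nhds 0) := by
  obtain ⟨B, hB1, hpoly⟩ := polyBound q hq f hmonic hdeg
  obtain ⟨C, hC0, hC⟩ := CBound q f B hB1 hpoly
  have hq0 : (0:ℝ) < (q:ℝ) := by
    have : 0 < q := by omega
    exact_mod_cast this
  have hq2 : (2:ℝ) ≤ (q:ℝ) := by exact_mod_cast hq
  set r : ℝ := ((q:ℝ))⁻¹ with hrdef
  have hrpos : 0 < r := inv_pos.mpr hq0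
  have hr0 : 0 ≤ r := hrpos.le
  have hrq : r * (q:ℝ) = 1 := inv_mul_cancel₀ hq0.ne'
  have hrhalf : r ≤ 1/2 := by nlinarith
  have hr1 : r < 1 := by nlinarith
  set lm : ℂ → ℝ := fun z => Real.log (max (‖z‖) 1) with hlm
  have hlm0 : ∀ z, 0 ≤ lm z := fun z => Real.log_nonneg (le_max_right _ _)
  set gs : ℕ → ℂ → ℝ := fun n z => r ^ n * lm ((fun w : ℂ => f.eval w)^[n] z) with hgs
  set F : ℕ → ℂ → ℝ := fun n z => r ^ (n+1) *
      (lm (f.eval ((fun w : ℂ => f.eval w)^[n] z))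
        - q * lm ((fun w : ℂ => f.eval w)^[n] z)) with hFdef
  have hstep : ∀ (n : ℕ) (z : ℂ), gs (n+1) z - gs n z = F n z := by
    intro n z
    simp only [hgs, hFdef, Function.iterate_succ_apply']
    linear_combination (lm ((fun w : ℂ => f.eval w)^[n] z) * r ^ n) * hrq
  have hFb : ∀ (n : ℕ) (z : ℂ), |F n z| ≤ C * r ^ (n+1) := by
    intro n z
    calc |F n z| = r ^ (n+1) * |lm (f.eval ((fun w : ℂ => f.eval w)^[n] z))
          - q * lm ((fun w : ℂ => f.eval w)^[n] z)| := by
          rw [hFdef, abs_mul, abs_of_nonneg (pow_nonneg hr0 _)]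
    _ ≤ r ^ (n+1) * C := mul_le_mul_of_nonneg_left (hC _) (pow_nonneg hr0 _)
    _ = C * r ^ (n+1) := mul_comm _ _
  have hsumm : Summable fun n : ℕ => C * r ^ (n+1) := by
    have h := (summable_geometric_of_lt_one hr0 hr1).mul_left (C * r)
    refine h.congr fun n => ?_
    rw [pow_succ]; ring
  have hSz : ∀ z : ℂ, Summable fun n => F n z := fun z =>
    Summable.of_norm_bounded hsumm fun n => by
      rw [Real.norm_eq_abs]; exact hFb n z
  set g : ℂ → ℝ := fun z => gs 0 z + ∑' n, F n z with hgdef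
  have hpartial : ∀ (z : ℂ) (n : ℕ), ∑ k ∈ Finset.range n, F k z = gs n z - gs 0 z := by
    intro z n
    calc ∑ k ∈ Finset.range n, F k z
        = ∑ k ∈ Finset.range n, (gs (k+1) z - gs k z) :=
          Finset.sum_congr rfl fun k _ => (hstep k z).symm
    _ = gs n z - gs 0 z := Finset.sum_range_sub (fun k => gs k z) n
  have htend : ∀ z : ℂ, Tendsto (fun n => gs n z) atTop (nhds (g z)) := by
    intro z
    have h1 := (hSz z).hasSum.tendsto_sum_nat
    have h2 : Tendsto (fun n => gs 0 z + ∑ k ∈ Finset.range n, F k z) atTop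
        (nhds (g z)) := tendsto_const_nhds.add h1
    refine h2.congr fun n => ?_
    rw [hpartial]; ring
  have geom : ∀ N n : ℕ, ∑ k ∈ Finset.Ico N n, r ^ (k+1) ≤ r ^ N := by
    intro N n
    rcases le_or_gt N n with h | h
    · rw [Finset.sum_Ico_eq_sum_range]
      have h4 : ∀ j ∈ Finset.range (n - N), r ^ (N + j + 1) = r ^ (N+1) * r ^ j := by
        intro j _
        rw [show N + j + 1 = (N+1) + j by omega, pow_add]
      rw [Finset.sum_congr rfl h4, ← Finset.mul_sum]
      have h5 : ∑ j ∈ Finset.range (n - N), r ^ j ≤ (1 - r)⁻¹ := by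
        calc ∑ j ∈ Finset.range (n - N), r ^ j ≤ ∑' j : ℕ, r ^ j :=
              Summable.sum_le_tsum _ (fun i _ => pow_nonneg hr0 i)
                (summable_geometric_of_lt_one hr0 hr1)
        _ = (1-r)⁻¹ := tsum_geometric_of_lt_one hr0 hr1
      have h6 : (1 - r)⁻¹ ≤ 2 := by
        have h0 : (1:ℝ)/2 ≤ 1 - r := by linarith
        calc (1-r)⁻¹ ≤ ((1:ℝ)/2)⁻¹ := by gcongr
        _ = 2 := by norm_num
      calc r ^ (N+1) * ∑ j ∈ Finset.range (n - N), r ^ j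
          ≤ r ^ (N+1) * (1-r)⁻¹ := mul_le_mul_of_nonneg_left h5 (pow_nonneg hr0 _)
      _ ≤ r ^ (N+1) * 2 := mul_le_mul_of_nonneg_left h6 (pow_nonneg hr0 _)
      _ ≤ r ^ N := by
          rw [pow_succ]
          nlinarith [pow_nonneg hr0 N]
    · rw [Finset.Ico_eq_empty (by omega)]
      simp only [Finset.sum_empty]
      positivity
  have htail : ∀ (z : ℂ) (D : ℝ) (N : ℕ), 0 ≤ D →
      (∀ k, N ≤ k → |F k z| ≤ D * r ^ (k+1)) → |g z - gs N z| ≤ D * r ^ N := by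
    intro z D N hD hFk
    have hlim : Tendsto (fun n => |gs n z - gs N z|) atTop (nhds |g z - gs N z|) :=
      (((htend z).sub_const _).abs)
    refine le_of_tendsto hlim ?_
    filter_upwards [eventually_ge_atTop N] with n hn
    have hIco : gs n z - gs N z = ∑ k ∈ Finset.Ico N n, F k z := by
      rw [Finset.sum_Ico_eq_sub _ hn, hpartial, hpartial]; ring
    rw [hIco]
    calc |∑ k ∈ Finset.Ico N n, F k z| ≤ ∑ k ∈ Finset.Ico N n, |F k z| :=
          Finset.abs_sum_le_sum_abs _ _
    _ ≤ ∑ k ∈ Finset.Ico N n, D * r ^ (k+1) :=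
          Finset.sum_le_sum fun k hk => hFk k (Finset.mem_Ico.mp hk).1
    _ = D * ∑ k ∈ Finset.Ico N n, r ^ (k+1) := by rw [Finset.mul_sum]
    _ ≤ D * r ^ N := mul_le_mul_of_nonneg_left (geom N n) hD
  have hKzero : ∀ z : ℂ, z ∈ filledJulia f → g z = 0 := by
    intro z hz
    have hz' : Bornology.IsBounded
        (Set.range fun n : ℕ => (fun w : ℂ => f.eval w)^[n] z) := hz
    obtain ⟨M, hM⟩ := isBounded_iff_forall_norm_le.mp hz'
    have hM' : ∀ n : ℕ, ‖(fun w : ℂ => f.eval w)^[n] z‖ ≤ M := fun n => by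
      have h := hM _ (Set.mem_range_self n)
      exact h
    have hub : ∀ n, gs n z ≤ r ^ n * Real.log (max M 1) := by
      intro n
      refine mul_le_mul_of_nonneg_left ?_ (pow_nonneg hr0 n)
      refine Real.log_le_log (lt_of_lt_of_le one_pos (le_max_right _ _)) ?_
      exact max_le_max (hM' n) le_rfl
    have hlb : ∀ n, 0 ≤ gs n z := fun n => mul_nonneg (pow_nonneg hr0 n) (hlm0 _)
    have hz0 : Tendsto (fun n => gs n z) atTop (nhds 0) := by
      refine squeeze_zero hlb hub ?_
      have h := (tendsto_pow_atTop_nhds_zero_of_lt_one hr0 hr1).mul_const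
        (Real.log (max M 1))
      simpa using h
    exact tendsto_nhds_unique (htend z) hz0
  have hpos : ∀ z : ℂ, z ∉ filledJulia f → 0 < g z := by
    intro z hz
    have hub : ∀ M : ℝ, ∃ n : ℕ, M < ‖(fun w : ℂ => f.eval w)^[n] z‖ := by
      intro M
      by_contra h
      push_neg at h
      refine hz ?_
      show Bornology.IsBounded (Set.range fun n : ℕ => (fun w : ℂ => f.eval w)^[n] z)
      refine isBounded_iff_forall_norm_le.mpr ⟨M, ?_⟩
      rintro x ⟨n, rfl⟩
      exact h n
    obtain ⟨N, hN⟩ := hub (Real.exp (C + 1))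
    have h1 : C + 1 ≤ lm ((fun w : ℂ => f.eval w)^[N] z) := by
      calc C + 1 = Real.log (Real.exp (C+1)) := (Real.log_exp _).symm
      _ ≤ Real.log (max (‖(fun w : ℂ => f.eval w)^[N] z‖) 1) :=
            Real.log_le_log (Real.exp_pos _) (le_trans hN.le (le_max_left _ _))
    have h2 : r ^ N * (C + 1) ≤ gs N z :=
      mul_le_mul_of_nonneg_left h1 (pow_nonneg hr0 N)
    have h3 := htail z C N hC0 fun k _ => hFb k z
    have h4 : 0 < r ^ N := pow_pos hrpos N
    have h5 := (abs_le.mp h3).1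
    nlinarith
  refine ⟨g, ?_, ?_, ?_, ?_, hpos, ?_⟩
  · -- limit
    intro z
    refine Filter.Tendsto.congr (fun n => ?_) (htend z)
    rw [logplus_eq _ (norm_nonneg _)]
    simp only [hgs, hlm, hrdef, inv_pow]
  · -- continuity
    have hc0 : Continuous lm := contLog1.comp continuous_norm
    have hce : ∀ n : ℕ, Continuous fun z : ℂ => (fun w : ℂ => f.eval w)^[n] z :=
      fun n => (f.continuous).iterate n
    have hcF : ∀ n, Continuous (F n) := by
      intro n
      exact continuous_const.mul (((hc0.comp f.continuous).comp (hce n)).sub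
        (continuous_const.mul (hc0.comp (hce n))))
    exact (continuous_const.mul (hc0.comp (hce 0))).add
      (continuous_tsum hcF hsumm fun n z => by
        rw [Real.norm_eq_abs]; exact hFb n z)
  · -- functional equation
    intro z
    have h1 : ∀ n : ℕ, gs n (f.eval z) = (q:ℝ) * gs (n+1) z := by
      intro n
      have he : (fun w : ℂ => f.eval w)^[n+1] z
          = (fun w : ℂ => f.eval w)^[n] (f.eval z) :=
        Function.iterate_succ_apply _ n z
      simp only [hgs]
      rw [← he]
      linear_combination (-(lm ((fun w : ℂ => f.eval w)^[n+1] z) * r ^ n)) * hrq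
    have h3 : Tendsto (fun n => gs (n+1) z) atTop (nhds (g z)) :=
      (htend z).comp (tendsto_add_atTop_nat 1)
    have h4 : Tendsto (fun n => (q:ℝ) * gs (n+1) z) atTop (nhds ((q:ℝ) * g z)) :=
      h3.const_mul _
    exact tendsto_nhds_unique (htend (f.eval z)) (h4.congr fun n => (h1 n).symm)
  · -- zero iff
    intro z
    constructor
    · intro h0
      by_contra hK
      exact absurd h0 (ne_of_gt (hpos z hK))
    · exact hKzero z
  · -- asymptotics
    have hIter : ∀ z : ℂ, 2*B ≤ ‖z‖ → ∀ n : ℕ,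
        2*B ≤ ‖(fun w : ℂ => f.eval w)^[n] z‖ ∧
        ‖z‖ ≤ ‖(fun w : ℂ => f.eval w)^[n] z‖ := by
      intro z hz n
      induction n with
      | zero => exact ⟨by simpa using hz, by simp⟩
      | succ n ih =>
        have he : (fun w : ℂ => f.eval w)^[n+1] z
            = f.eval ((fun w : ℂ => f.eval w)^[n] z) :=
          Function.iterate_succ_apply' _ n z
        obtain ⟨h1, h2⟩ := ih
        have h3 := (hpoly _ h1).1
        rw [he]
        exact ⟨le_trans h1 h3, le_trans h2 h3⟩
    have hasymp : ∀ z : ℂ, 2*B ≤ ‖z‖ →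
        |g z - Real.log (‖z‖)| ≤ 2*B/‖z‖ := by
      intro z hz
      have haz : (2:ℝ) ≤ ‖z‖ := le_trans (by linarith) hz
      have haz0 : (0:ℝ) < ‖z‖ := by linarith
      have hg0 : gs 0 z = Real.log (‖z‖) := by
        simp only [hgs, hlm, pow_zero, one_mul, Function.iterate_zero, id_eq]
        rw [max_eq_left (by linarith)]
      have hFk : ∀ k : ℕ, 0 ≤ k → |F k z| ≤ (2*B/‖z‖) * r ^ (k+1) := by
        intro k _
        obtain ⟨h1, h2⟩ := hIter z hz k
        obtain ⟨h3, h4⟩ := hpoly _ h1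
        have hw2 : (2:ℝ) ≤ ‖(fun w : ℂ => f.eval w)^[k] z‖ := by linarith
        have e1 : max (‖(fun w : ℂ => f.eval w)^[k] z‖) 1
            = ‖(fun w : ℂ => f.eval w)^[k] z‖ := max_eq_left (by linarith)
        have e2 : max (‖f.eval ((fun w : ℂ => f.eval w)^[k] z)‖) 1
            = ‖f.eval ((fun w : ℂ => f.eval w)^[k] z)‖ :=
          max_eq_left (by linarith)
        have h5 : 2*B/‖(fun w : ℂ => f.eval w)^[k] z‖
            ≤ 2*B/‖z‖ :=
          div_le_div_of_nonneg_left (by linarith) haz0 h2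
        calc |F k z| = r ^ (k+1) * |lm (f.eval ((fun w : ℂ => f.eval w)^[k] z))
              - q * lm ((fun w : ℂ => f.eval w)^[k] z)| := by
              rw [hFdef, abs_mul, abs_of_nonneg (pow_nonneg hr0 _)]
        _ = r ^ (k+1) * |Real.log (‖f.eval ((fun w : ℂ => f.eval w)^[k] z)‖)
              - q * Real.log (‖(fun w : ℂ => f.eval w)^[k] z‖)| := by
              simp only [hlm]; rw [e1, e2]
        _ ≤ r ^ (k+1) * (2*B/‖(fun w : ℂ => f.eval w)^[k] z‖) :=
              mul_le_mul_of_nonneg_left h4 (pow_nonneg hr0 _)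
        _ ≤ r ^ (k+1) * (2*B/‖z‖) :=
              mul_le_mul_of_nonneg_left h5 (pow_nonneg hr0 _)
        _ = (2*B/‖z‖) * r ^ (k+1) := mul_comm _ _
      have hD : 0 ≤ 2*B/‖z‖ := by positivity
      have h6 := htail z (2*B/‖z‖) 0 hD fun k hk => hFk k hk
      rw [pow_zero, mul_one, hg0] at h6
      exact h6
    have h2 : Tendsto (fun z : ℂ => 2*B/‖z‖)
        (comap (fun z : ℂ => ‖z‖) atTop) (nhds 0) :=
      Filter.Tendsto.div_atTop tendsto_const_nhds tendsto_comap
    refine squeeze_zero_norm' ?_ h2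
    have h3 : ∀ᶠ z : ℂ in comap (fun z : ℂ => ‖z‖) atTop,
        2*B ≤ ‖z‖ := tendsto_comap.eventually (eventually_ge_atTop (2*B))
    filter_upwards [h3] with z hz
    rw [Real.norm_eq_abs]
    exact hasymp z hz
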